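/- Let c, d be positive integers with d | c and let f be the largest positive integer with f² | cd. Then for every integer k ≥ 1, the maximum of f̃/d̃^k over all integers d̃ with d | d̃ | c and f̃ the largest integer with f̃² | c·d̃, equals f/d^k; and for k = 0 the maximum of f̃ equals c (attained at d̃ = c). -/
import Mathlib

lemma maxsq_fact {n f : ℕ} (hn : n ≠ 0) (h1 : f ^ 2 ∣ n)
    (h2 : ∀ f' : ℕ, f' ^ 2 ∣ n → f' ≤ f) (p : ℕ) :
    f.factorization p = n.factorization p / 2 := by
  have hf0 : f ≠ 0 := by
    have := h2 1 (by simpa using one_dvd n); omega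
  by_cases hp : p.Prime
  · have hle : 2 * f.factorization p ≤ n.factorization p := by
      have := (Nat.factorization_le_iff_dvd (pow_ne_zero 2 hf0) hn).2 h1 p
      simpa [Nat.factorization_pow] using this
    refine le_antisymm (by omega) ?_
    by_contra hlt
    push_neg at hlt
    have hfp : (f * p) ^ 2 ∣ n := by
      rw [← Nat.factorization_le_iff_dvd (pow_ne_zero 2 (Nat.mul_ne_zero hf0 hp.pos.ne')) hn]
      intro q
      rw [Nat.factorization_pow, Nat.factorization_mul hf0 hp.pos.ne']
      have hq := (Nat.factorization_le_iff_dvd (pow_ne_zero 2 hf0) hn).2 h1 q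
      rw [Nat.factorization_pow] at hq
      simp only [Finsupp.coe_add, Finsupp.coe_smul, Pi.add_apply, Pi.smul_apply,
        smul_eq_mul] at hq ⊢
      rw [hp.factorization, Finsupp.single_apply]
      rcases eq_or_ne p q with rfl | hqp
      · norm_num; omega
      · simp only [if_neg hqp]; omega
    have hle2 := h2 (f * p) hfp
    have h2p : f * 2 ≤ f * p := Nat.mul_le_mul_left f hp.two_le
    omega
  · rw [Nat.factorization_eq_zero_of_not_prime _ hp,
      Nat.factorization_eq_zero_of_not_prime _ hp]

lemma sq_dvd_fact {n f : ℕ} (hn : n ≠ 0) (hf0 : f ≠ 0) (h1 : f ^ 2 ∣ n) (p : ℕ) :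
    2 * f.factorization p ≤ n.factorization p := by
  have := (Nat.factorization_le_iff_dvd (pow_ne_zero 2 hf0) hn).2 h1 p
  simpa [Nat.factorization_pow] using this

/-- Let `d ∣ c` and let `f` be the largest integer with `f² ∣ cd`.
Then for every `k ≥ 1`, the maximum of `f̃/d̃^k` over divisors `d ∣ d̃ ∣ c` (with `f̃`
the largest integer with `f̃² ∣ c·d̃`) equals `f/d^k`; and for `k = 0` the maximum of
`f̃` equals `c`, attained at `d̃ = c`. -/
theorem stmt18 (c d f : ℕ) (hc : 0 < c) (hdc : d ∣ c)
    (hf1 : f ^ 2 ∣ c * d) (hf2 : ∀ f' : ℕ, f' ^ 2 ∣ c * d → f' ≤ f) :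
    (∀ k : ℕ, 1 ≤ k → ∀ dt ft : ℕ, d ∣ dt → dt ∣ c →
      ft ^ 2 ∣ c * dt → (∀ f' : ℕ, f' ^ 2 ∣ c * dt → f' ≤ ft) →
      (ft : ℝ) / (dt : ℝ) ^ k ≤ (f : ℝ) / (d : ℝ) ^ k) ∧
    (∀ dt ft : ℕ, d ∣ dt → dt ∣ c → ft ^ 2 ∣ c * dt → ft ≤ c) ∧
    (∀ ft : ℕ, ft ^ 2 ∣ c * c → (∀ f' : ℕ, f' ^ 2 ∣ c * c → f' ≤ ft) → ft = c) := by
  have hd0 : d ≠ 0 := by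
    rintro rfl; rw [zero_dvd_iff] at hdc; omega
  have hf0 : f ≠ 0 := by
    have := hf2 1 (by simpa using one_dvd (c * d)); omega
  have hcd0 : c * d ≠ 0 := by positivity
  refine ⟨?_, ?_, ?_⟩
  · intro k hk dt ft hddt hdtc hft1 hft2
    have hdt0 : dt ≠ 0 := by
      rintro rfl; rw [zero_dvd_iff] at hdtc; omega
    have hft0 : ft ≠ 0 := by
      have := hft2 1 (by simpa using one_dvd (c * dt)); omega
    obtain ⟨m, hm⟩ := hddt
    have hm0 : m ≠ 0 := by rintro rfl; simp at hm; omega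
    -- key: ft ∣ f * m
    have key : ft ∣ f * m := by
      rw [← Nat.factorization_le_iff_dvd hft0 (by positivity)]
      intro p
      have h1 : 2 * ft.factorization p ≤
          (c * d).factorization p + m.factorization p := by
        have h := sq_dvd_fact (n := c * dt) (by positivity) hft0 hft1 p
        rw [hm, ← mul_assoc, Nat.factorization_mul (by positivity) hm0,
          Finsupp.add_apply] at h
        exact h
      have h3 : ft.factorization p ≤ f.factorization p + m.factorization p := by
        rw [maxsq_fact hcd0 hf1 hf2 p]; omega
      rw [Nat.factorization_mul hf0 hm0, Finsupp.add_apply]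
      exact h3
    have hftle : ft ≤ f * m := Nat.le_of_dvd (by positivity) key
    -- pass to reals
    have hdpos : (0:ℝ) < (d:ℝ) ^ k := by positivity
    have hdtpos : (0:ℝ) < (dt:ℝ) ^ k := by positivity
    rw [div_le_div_iff₀ hdtpos hdpos]
    have hnat : ft * d ^ k ≤ f * dt ^ k := by
      have hmk : m ≤ m ^ k := Nat.le_self_pow (by omega) m
      calc ft * d ^ k ≤ f * m * d ^ k := Nat.mul_le_mul_right _ hftle
        _ ≤ f * m ^ k * d ^ k := by
            exact Nat.mul_le_mul_right _ (Nat.mul_le_mul_left _ hmk)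
        _ = f * dt ^ k := by rw [hm, mul_pow]; ring
    calc (ft:ℝ) * (d:ℝ) ^ k = ((ft * d ^ k : ℕ) : ℝ) := by push_cast; ring
      _ ≤ ((f * dt ^ k : ℕ) : ℝ) := by exact_mod_cast hnat
      _ = (f:ℝ) * (dt:ℝ) ^ k := by push_cast; ring
  · intro dt ft hddt hdtc hft1
    have h : ft ^ 2 ∣ c ^ 2 := by
      calc ft ^ 2 ∣ c * dt := hft1
        _ ∣ c ^ 2 := by rw [sq]; exact mul_dvd_mul_left c hdtc
    have := Nat.le_of_dvd (by positivity) h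
    exact (pow_le_pow_iff_left₀ (Nat.zero_le ft) (Nat.zero_le c) two_ne_zero).1 this
  · intro ft hft1 hft2
    have h1 : c ≤ ft := hft2 c (by rw [sq])
    have h2 : ft ≤ c := by
      have := Nat.le_of_dvd (show 0 < c * c by positivity) hft1
      nlinarith
    omega
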